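/- The quadratic module in R = ℝ[x,y] generated by the set S' = {a²x + b²y + 2ab : a, b ∈ ℝ[x,y]} is not finitely generated as a quadratic module. -/

import Mathlib

/-- A quadratic module in a commutative ring `R`. -/
def IsQMR {R : Type*} [CommRing R] (M : Set R) : Prop :=
  1 ∈ M ∧ (∀ a ∈ M, ∀ b ∈ M, a + b ∈ M) ∧ ∀ r : R, ∀ m ∈ M, r ^ 2 * m ∈ M

/-- The smallest quadratic module of `R` containing `G`. -/
def QMgenR {R : Type*} [CommRing R] (G : Set R) : Set R :=
  ⋂₀ {M | IsQMR M ∧ G ⊆ M}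

set_option maxHeartbeats 1000000

namespace NFG
section Dev
open Polynomial

variable {R : Type*} [CommRing R]

/-- the generating "pieces" of the quadratic module generated by `S`. -/
def QMpieces (S : Set R) : Set R := {x | ∃ r u, (u ∈ S ∨ u = 1) ∧ x = r ^ 2 * u}

lemma isQMR_closure (S : Set R) :
    IsQMR ((AddSubmonoid.closure (QMpieces S) : AddSubmonoid R) : Set R) := by
  refine ⟨?_, ?_, ?_⟩
  · exact AddSubmonoid.subset_closure ⟨1, 1, Or.inr rfl, by ring⟩
  · intro a ha b hb; exact AddSubmonoid.add_mem _ ha hb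
  · intro r m hm
    induction hm using AddSubmonoid.closure_induction with
    | mem x hx =>
      obtain ⟨s, u, hu, rfl⟩ := hx
      exact AddSubmonoid.subset_closure ⟨r * s, u, hu, by ring⟩
    | zero => simpa using (AddSubmonoid.closure (QMpieces S)).zero_mem
    | add x y _ _ hx hy =>
      have : r ^ 2 * (x + y) = r ^ 2 * x + r ^ 2 * y := by ring
      rw [this]; exact AddSubmonoid.add_mem _ hx hy

lemma subset_QMgenR (S : Set R) : S ⊆ QMgenR S := by
  intro x hx
  intro M hM
  exact hM.2 hx

lemma one_mem_QMgenR (S : Set R) : (1 : R) ∈ QMgenR S := by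
  intro M hM; exact hM.1.1

lemma QMgenR_subset_closure (S : Set R) :
    QMgenR S ⊆ (AddSubmonoid.closure (QMpieces S) : Set R) := by
  intro x hx
  exact hx _ ⟨isQMR_closure S, fun s hs =>
    AddSubmonoid.subset_closure ⟨1, s, Or.inl hs, by ring⟩⟩

lemma exists_multiset_of_mem_closure {S : Set R} {x : R}
    (hx : x ∈ AddSubmonoid.closure S) :
    ∃ l : Multiset R, (∀ y ∈ l, y ∈ S) ∧ l.sum = x := by
  induction hx using AddSubmonoid.closure_induction with
  | mem y hy => exact ⟨{y}, by simpa using hy, by simp⟩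
  | zero => exact ⟨0, by simp, rfl⟩
  | add a b _ _ ha hb =>
    obtain ⟨la, hla, rfl⟩ := ha
    obtain ⟨lb, hlb, rfl⟩ := hb
    exact ⟨la + lb, fun y hy => by
      rcases Multiset.mem_add.1 hy with h | h
      · exact hla y h
      · exact hlb y h, by simp⟩

lemma rep_of_mem_QMgenR {S : Set R} {x : R} (hx : x ∈ QMgenR S) :
    ∃ l : Multiset R, (∀ y ∈ l, ∃ r u, (u ∈ S ∨ u = 1) ∧ y = r ^ 2 * u) ∧ l.sum = x :=
  exists_multiset_of_mem_closure (QMgenR_subset_closure S hx)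

/-- skolemization for multisets. -/
lemma multiset_skolem {α β : Type*} (f : β → α) (P : β → Prop) (l : Multiset α)
    (h : ∀ x ∈ l, ∃ y, P y ∧ x = f y) :
    ∃ l' : Multiset β, (∀ y ∈ l', P y) ∧ l = l'.map f := by
  induction l using Multiset.induction with
  | empty => exact ⟨0, by simp, by simp⟩
  | cons a s ih =>
    obtain ⟨l', hl', rfl⟩ := ih (fun x hx => h x (Multiset.mem_cons_of_mem hx))
    obtain ⟨y, hy, hay⟩ := h a (Multiset.mem_cons_self a _)
    exact ⟨y ::ₘ l', fun z hz => by
      rcases Multiset.mem_cons.1 hz with rfl | hz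
      · exact hy
      · exact hl' z hz, by simp [hay]⟩




lemma coeff_multiset_sum {R : Type*} [Semiring R] (l : Multiset R[X]) (n : ℕ) :
    l.sum.coeff n = (l.map (fun p => p.coeff n)).sum := by
  induction l using Multiset.induction with
  | empty => simp
  | cons a s ih => simp [ih]

lemma eval_multiset_sum {R : Type*} [CommSemiring R] (l : Multiset R[X]) (c : R) :
    l.sum.eval c = (l.map (fun p => p.eval c)).sum := by
  induction l using Multiset.induction with
  | empty => simp
  | cons a s ih => simp [ih]

/-- a real polynomial vanishing on `(0,∞)` is zero. -/
lemma poly_eq_zero_of_eval_pos (p : ℝ[X]) (h : ∀ c : ℝ, 0 < c → p.eval c = 0) : p = 0 := by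
  apply Polynomial.eq_zero_of_infinite_isRoot
  exact Set.Infinite.mono (fun c hc => h c hc) (Set.Ioi_infinite 0)

/-- member of a multiset of nonnegative reals with zero sum is zero. -/
lemma member_eq_zero_of_sum_eq_zero (l : Multiset ℝ) (h0 : ∀ x ∈ l, 0 ≤ x)
    (hs : l.sum = 0) : ∀ x ∈ l, x = 0 := by
  intro x hx
  have h1 : x ≤ l.sum := Multiset.single_le_sum h0 x hx
  have := h0 x hx
  linarith [h1.trans_eq hs]

/-- sup of a multiset of naturals is attained or zero. -/
lemma multiset_sup_mem (l : Multiset ℕ) : l.sup = 0 ∨ l.sup ∈ l := by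
  induction l using Multiset.induction with
  | empty => simp
  | cons a s ih =>
    rcases le_total a s.sup with h | h
    · rcases ih with h0 | hmem
      · left
        rw [Multiset.sup_cons]
        omega
      · right
        rw [Multiset.sup_cons, sup_eq_right.2 h]
        exact Multiset.mem_cons_of_mem hmem
    · right
      rw [Multiset.sup_cons, sup_eq_left.2 h]
      exact Multiset.mem_cons_self a s

/-- product of distinct linear factors divides a polynomial vanishing at those points -/
lemma prod_X_sub_C_dvd : ∀ (n : ℕ) (ρ : Fin n → ℝ), Function.Injective ρ →
    ∀ (p : ℝ[X]), (∀ i, p.eval (ρ i) = 0) →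
    (∏ i, (X - C (ρ i))) ∣ p := by
  intro n
  induction n with
  | zero => intro ρ _ p _; simpa using one_dvd p
  | succ n ih =>
    intro ρ hinj p h
    have h0 : (X - C (ρ 0)) ∣ p := Polynomial.dvd_iff_isRoot.2 (h 0)
    obtain ⟨q, rfl⟩ := h0
    have hq : ∀ i : Fin n, q.eval (ρ i.succ) = 0 := by
      intro i
      have hthis := h i.succ
      rw [Polynomial.eval_mul] at hthis
      simp only [Polynomial.eval_sub, Polynomial.eval_X, Polynomial.eval_C] at hthis
      rcases mul_eq_zero.1 hthis with h' | h'
      · exfalso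
        have : ρ i.succ = ρ 0 := by linarith [sub_eq_zero.1 h']
        exact (Fin.succ_ne_zero i) (hinj this)
      · exact h'
    have hinj' : Function.Injective (fun i : Fin n => ρ i.succ) :=
      fun a b hab => Fin.succ_injective n (hinj hab)
    have hdvd := ih (fun i => ρ i.succ) hinj' q hq
    rw [Fin.prod_univ_succ]
    exact mul_dvd_mul_left _ hdvd

/-- coefficient of a square at twice the degree bound. -/
lemma coeff_sq_two_mul {κ : ℕ} (p : ℝ[X]) (hp : p.natDegree ≤ κ) :
    (p ^ 2).coeff (2 * κ) = (p.coeff κ) ^ 2 := by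
  have h2 : p ^ 2 = p * p := sq p
  rw [h2, Polynomial.coeff_mul]
  rw [Finset.sum_eq_single (κ, κ)]
  · ring
  · rintro ⟨i, j⟩ hij hne
    rw [Finset.HasAntidiagonal.mem_antidiagonal] at hij
    have hne' : ¬(i = κ ∧ j = κ) := by
      intro ⟨h1, h2⟩; exact hne (by rw [h1, h2])
    rcases lt_or_ge κ i with h | h
    · rw [Polynomial.coeff_eq_zero_of_natDegree_lt (lt_of_le_of_lt hp h), zero_mul]
    · have : κ < j := by omega
      rw [Polynomial.coeff_eq_zero_of_natDegree_lt (lt_of_le_of_lt hp this), mul_zero]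
  · intro h
    exfalso; exact h (by rw [Finset.HasAntidiagonal.mem_antidiagonal]; ring)

/-- degree bound for sums of squares: each square has degree at most that of the sum. -/
lemma sos_deg_bound (l : Multiset ℝ[X]) (F : ℝ[X])
    (hsum : (l.map (fun p => p ^ 2)).sum = F) :
    ∀ p ∈ l, 2 * p.natDegree ≤ F.natDegree := by
  set κ := (l.map Polynomial.natDegree).sup with hκ
  have hle : ∀ p ∈ l, p.natDegree ≤ κ := fun p hp =>
    Multiset.le_sup (Multiset.mem_map_of_mem _ hp)
  rcases multiset_sup_mem (l.map Polynomial.natDegree) with h0 | hmem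
  · intro p hp
    have h1 := hle p hp
    have hκ0 : κ = 0 := by rw [hκ]; exact h0
    omega
  · obtain ⟨p₀, hp₀, hdeg₀'⟩ := Multiset.mem_map.1 hmem
    have hdeg₀ : p₀.natDegree = κ := by rw [hκ]; exact hdeg₀'
    have hc : F.coeff (2 * κ) = (l.map (fun p => (p.coeff κ) ^ 2)).sum := by
      rw [← hsum, coeff_multiset_sum, Multiset.map_map]
      congr 1
      apply Multiset.map_congr rfl
      intro p hp
      exact coeff_sq_two_mul p (hle p hp)
    rcases Nat.eq_zero_or_pos κ with h0 | hpos
    · intro p hp; have := hle p hp; omega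
    · have hp₀ne : p₀ ≠ 0 := by
        intro hc'; rw [hc', Polynomial.natDegree_zero] at hdeg₀; omega
      have hco : p₀.coeff κ ≠ 0 := by
        rw [← hdeg₀]
        exact Polynomial.coeff_ne_zero_of_eq_degree (Polynomial.degree_eq_natDegree hp₀ne)
      have hFne : F.coeff (2 * κ) ≠ 0 := by
        rw [hc]
        have hnn : ∀ x ∈ l.map (fun p => (p.coeff κ) ^ 2), (0:ℝ) ≤ x := by
          intro x hx
          obtain ⟨p, _, rfl⟩ := Multiset.mem_map.1 hx
          positivity
        have h1 : (p₀.coeff κ) ^ 2 ≤ (l.map (fun p => (p.coeff κ) ^ 2)).sum :=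
          Multiset.single_le_sum hnn _ (Multiset.mem_map_of_mem _ hp₀)
        have h2 : (0:ℝ) < (p₀.coeff κ) ^ 2 := by positivity
        linarith
      have h2κ : 2 * κ ≤ F.natDegree := Polynomial.le_natDegree_of_ne_zero hFne
      intro p hp
      have := hle p hp
      omega




lemma exists_root_Ioo (p : ℝ[X]) (a b : ℝ) (hab : a < b)
    (hsign : p.eval a * p.eval b < 0) : ∃ x ∈ Set.Ioo a b, p.eval x = 0 := by
  have hc : ContinuousOn (fun x => p.eval x) (Set.Icc a b) := (p.continuous).continuousOn
  rcases lt_or_ge (p.eval a) 0 with h | h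
  · have hb : 0 < p.eval b := by nlinarith
    obtain ⟨x, hx, hx0⟩ := intermediate_value_Ioo hab.le hc
      (show (0:ℝ) ∈ Set.Ioo (p.eval a) (p.eval b) from ⟨h, hb⟩)
    exact ⟨x, hx, hx0⟩
  · have ha : 0 < p.eval a := by
      rcases h.lt_or_eq with h' | h'
      · exact h'
      · exfalso; rw [← h'] at hsign; simp at hsign
    have hb : p.eval b < 0 := by nlinarith
    obtain ⟨x, hx, hx0⟩ := intermediate_value_Ioo' hab.le hc
      (show (0:ℝ) ∈ Set.Ioo (p.eval b) (p.eval a) from ⟨hb, ha⟩)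
    exact ⟨x, hx, hx0⟩

lemma card_filter_not_lt (N k : ℕ) (hk : k ≤ N) :
    (Finset.univ.filter (fun i : Fin N => k ≤ i.1)).card = N - k := by
  rw [show (N - k) = (Finset.Ico k N).card from (Nat.card_Ico k N).symm]
  apply Finset.card_bij (fun (i : Fin N) _ => i.1)
  · intro a ha
    simp only [Finset.mem_filter, Finset.mem_univ, true_and] at ha
    exact Finset.mem_Ico.2 ⟨ha, a.2⟩
  · intro a _ b _ hab; exact Fin.ext hab
  · intro b hb
    rw [Finset.mem_Ico] at hb
    exact ⟨⟨b, hb.2⟩, by simp [hb.1], rfl⟩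

section Beta

variable (N : ℕ)

noncomputable def Tc : ℝ := 4 * (N + 1)

noncomputable def tau (i : Fin N) : ℝ := (i.1 + 1) * Tc N

noncomputable def Hpoly : ℝ[X] := ∏ i, (X - C (tau N i))

noncomputable def beta : ℝ[X] := Hpoly N - X

noncomputable def mpt (k : ℕ) : ℝ := k * Tc N + Tc N / 2

lemma Tc_pos : 0 < Tc N := by unfold Tc; positivity

lemma tau_pos (i : Fin N) : 0 < tau N i := by
  have := Tc_pos N
  unfold tau
  positivity

lemma tau_injective : Function.Injective (tau N) := by
  intro i j hij
  unfold tau at hij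
  have hT := Tc_pos N
  have h1 : (i.1 : ℝ) = j.1 := by nlinarith
  exact Fin.ext (by exact_mod_cast h1)

lemma tau_le (i : Fin N) : tau N i ≤ N * Tc N := by
  unfold tau
  have h1 : (i.1 : ℝ) + 1 ≤ N := by exact_mod_cast i.2
  nlinarith [Tc_pos N]

lemma Hpoly_monic : (Hpoly N).Monic :=
  monic_prod_of_monic _ _ (fun i _ => monic_X_sub_C _)

lemma Hpoly_natDegree : (Hpoly N).natDegree = N := by
  unfold Hpoly
  rw [natDegree_prod _ _ (fun i _ => (monic_X_sub_C (tau N i)).ne_zero)]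
  simp [natDegree_X_sub_C]

lemma Hpoly_eval_tau (i : Fin N) : (Hpoly N).eval (tau N i) = 0 := by
  unfold Hpoly
  rw [eval_prod]
  exact Finset.prod_eq_zero (Finset.mem_univ i) (by simp)

lemma Hpoly_eval_pos {c : ℝ} (hc : ∀ i, tau N i < c) : 0 < (Hpoly N).eval c := by
  unfold Hpoly
  rw [eval_prod]
  apply Finset.prod_pos
  intro i _
  simp only [eval_sub, eval_X, eval_C]
  linarith [hc i]

variable {N}

lemma Hpoly_degree_lt (hN : 2 ≤ N) : (X : ℝ[X]).degree < (Hpoly N).degree := by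
  have h1 : (Hpoly N).degree = (N : ℕ) := by
    rw [degree_eq_natDegree (Hpoly_monic N).ne_zero, Hpoly_natDegree]
  rw [degree_X, h1]
  exact_mod_cast (by omega : 1 < N)

lemma beta_monic (hN : 2 ≤ N) : (beta N).Monic := by
  have : beta N = Hpoly N + (-X) := by unfold beta; ring
  rw [this]
  exact (Hpoly_monic N).add_of_left (by rw [degree_neg]; exact Hpoly_degree_lt hN)

lemma beta_natDegree (hN : 2 ≤ N) : (beta N).natDegree = N := by
  have h1 : beta N = Hpoly N + (-X) := by unfold beta; ring
  have h2 : (beta N).degree = (Hpoly N).degree := by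
    rw [h1]
    exact degree_add_eq_left_of_degree_lt (by rw [degree_neg]; exact Hpoly_degree_lt hN)
  have := natDegree_eq_of_degree_eq h2
  rw [this, Hpoly_natDegree]

/-- the crucial sign estimate at the sample points -/
lemma Hpoly_sign (k : ℕ) (hk : k ≤ N) :
    (Tc N / 2) ^ N ≤ (-1 : ℝ) ^ (N - k) * (Hpoly N).eval (mpt N k) := by
  have hT := Tc_pos N
  set T := Tc N with hTdef
  -- the factor function
  set g : Fin N → ℝ := fun i => if i.1 < k then mpt N k - tau N i else tau N i - mpt N k with hg
  have hglb : ∀ i : Fin N, T / 2 ≤ g i := by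
    intro i
    rw [hg]
    dsimp only
    split_ifs with h
    · have h1 : (i.1 : ℝ) + 1 ≤ k := by exact_mod_cast h
      unfold mpt tau
      nlinarith
    · have h1 : (k : ℝ) ≤ i.1 := by exact_mod_cast not_lt.1 h
      unfold mpt tau
      nlinarith
  have hprod : (T / 2) ^ N ≤ ∏ i, g i := by
    calc (T / 2) ^ N = ∏ _i : Fin N, (T / 2) := by
          rw [Finset.prod_const, Finset.card_univ, Fintype.card_fin]
      _ ≤ ∏ i, g i := Finset.prod_le_prod (fun i _ => by positivity) (fun i _ => hglb i)
  have heval : (Hpoly N).eval (mpt N k) = (-1 : ℝ) ^ (N - k) * ∏ i, g i := by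
    unfold Hpoly
    rw [eval_prod]
    have hfac : ∀ i : Fin N, eval (mpt N k) (X - C (tau N i))
        = (if i.1 < k then (1:ℝ) else -1) * g i := by
      intro i
      rw [hg]
      simp only [eval_sub, eval_X, eval_C]
      split_ifs with h
      · ring
      · ring
    rw [Finset.prod_congr rfl (fun i _ => hfac i), Finset.prod_mul_distrib]
    congr 1
    rw [Finset.prod_ite, Finset.prod_const, Finset.prod_const]
    rw [one_pow, one_mul]
    congr 1
    rw [show (Finset.filter (fun x : Fin N => ¬ x.1 < k) Finset.univ)
        = (Finset.filter (fun x : Fin N => k ≤ x.1) Finset.univ) from by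
      apply Finset.filter_congr; intro x _; simp [not_lt]]
    exact card_filter_not_lt N k hk
  rw [heval, ← mul_assoc]
  have hsq : (-1 : ℝ) ^ (N - k) * (-1 : ℝ) ^ (N - k) = 1 := by
    rw [← pow_add]
    exact Even.neg_one_pow ⟨N - k, by ring⟩
  rw [hsq, one_mul]
  exact hprod

lemma mpt_lt (k : ℕ) (hk : k ≤ N) : 0 < mpt N k ∧ mpt N k < (N + 1) * Tc N := by
  have hT := Tc_pos N
  have h1 : (k : ℝ) ≤ N := by exact_mod_cast hk
  constructor
  · unfold mpt; positivity
  · unfold mpt; nlinarith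

lemma pow_ge (hN : 2 ≤ N) : (N + 1) * Tc N ≤ (Tc N / 2) ^ N := by
  have hT : Tc N = 4 * (N + 1) := rfl
  have h2 : Tc N / 2 = 2 * (N + 1) := by rw [hT]; ring
  have h3 : (Tc N / 2) ^ 2 ≤ (Tc N / 2) ^ N := by
    apply pow_le_pow_right₀
    · rw [h2]; nlinarith [Nat.cast_nonneg (α := ℝ) N]
    · exact hN
  have h4 : ((N:ℝ) + 1) * Tc N = (Tc N / 2) ^ 2 := by rw [hT]; ring
  rw [h4]; exact h3

/-- the alternating sign of `β` at the sample points. -/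
lemma beta_sign (hN : 2 ≤ N) (k : ℕ) (hk : k ≤ N) :
    0 < (-1 : ℝ) ^ (N - k) * (beta N).eval (mpt N k) := by
  have h1 := Hpoly_sign k hk
  have h2 := pow_ge hN
  have h3 := mpt_lt k hk
  have h4 : (-1 : ℝ) ^ (N - k) * (beta N).eval (mpt N k)
      = (-1 : ℝ) ^ (N - k) * (Hpoly N).eval (mpt N k) - (-1 : ℝ) ^ (N - k) * mpt N k := by
    unfold beta
    simp only [eval_sub, eval_X]
    ring
  rw [h4]
  have h5 : (-1 : ℝ) ^ (N - k) * mpt N k ≤ mpt N k := by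
    rcases Nat.even_or_odd (N - k) with he | ho
    · rw [he.neg_one_pow, one_mul]
    · rw [ho.neg_one_pow]
      nlinarith [h3.1]
  nlinarith [h3.2]

/-- existence of the `N` distinct real roots of `β`. -/
lemma beta_roots (hN : 2 ≤ N) :
    ∃ ρ : Fin N → ℝ, Function.Injective ρ ∧ ∀ i, (beta N).eval (ρ i) = 0 := by
  have hT := Tc_pos N
  have key : ∀ k : Fin N, ∃ x ∈ Set.Ioo (mpt N k.1) (mpt N (k.1 + 1)), (beta N).eval x = 0 := by
    intro k
    apply exists_root_Ioo
    · unfold mpt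
      push_cast
      nlinarith
    · -- opposite signs
      have s1 := beta_sign hN k.1 (le_of_lt k.2)
      have s2 := beta_sign hN (k.1 + 1) k.2
      have hsign : (-1 : ℝ) ^ (N - k.1) * (-1 : ℝ) ^ (N - (k.1 + 1)) = -1 := by
        have h1 : N - k.1 = (N - (k.1 + 1)) + 1 := by omega
        rw [h1, pow_succ]
        rw [show ((-1:ℝ) ^ (N - (k.1+1)) * -1) * (-1:ℝ) ^ (N - (k.1+1))
            = -((-1:ℝ) ^ (N - (k.1+1)) * (-1:ℝ) ^ (N - (k.1+1))) from by ring]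
        rw [← pow_add]
        rw [Even.neg_one_pow ⟨N - (k.1+1), by ring⟩]
      nlinarith [s1, s2]
  choose ρ hρ hρ0 using key
  refine ⟨ρ, ?_, hρ0⟩
  -- injectivity from disjoint intervals
  have hmono : ∀ a b : ℕ, a < b → mpt N a < mpt N b := by
    intro a b hab
    unfold mpt
    have h' : (a : ℝ) < b := by exact_mod_cast hab
    nlinarith
  intro i j hij
  by_contra hne
  rcases Ne.lt_or_gt (fun h : i = j => hne h) with h | h
  · have h1 : ρ i < mpt N (i.1 + 1) := (hρ i).2
    have h2 : mpt N j.1 < ρ j := (hρ j).1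
    have h3 : mpt N (i.1 + 1) ≤ mpt N j.1 := by
      rcases Nat.lt_or_ge (i.1 + 1) j.1 with h' | h'
      · exact (hmono _ _ h').le
      · have : i.1 + 1 = j.1 := by omega
        rw [this]
    rw [hij] at h1
    linarith
  · have h1 : ρ j < mpt N (j.1 + 1) := (hρ j).2
    have h2 : mpt N i.1 < ρ i := (hρ i).1
    have h3 : mpt N (j.1 + 1) ≤ mpt N i.1 := by
      rcases Nat.lt_or_ge (j.1 + 1) i.1 with h' | h'
      · exact (hmono _ _ h').le
      · have : j.1 + 1 = i.1 := by omega
        rw [this]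
    rw [← hij] at h1
    linarith

end Beta




/-- the ambient ring `(ℝ[y])[x]` -/
abbrev PR := Polynomial (Polynomial ℝ)

/-- the inner variable `y` as an element of `PR` -/
noncomputable def Yc : PR := Polynomial.C Polynomial.X

/-- the quadratic-module generator `A² x + B² y + 2AB` -/
noncomputable def pieceFun (z : PR × PR) : PR :=
  z.1 ^ 2 * Polynomial.X + z.2 ^ 2 * Yc + 2 * (z.1 * z.2)

lemma natDeg_sq {R : Type*} [CommRing R] [IsDomain R] (r : Polynomial R) :
    (r ^ 2).natDegree = 2 * r.natDegree := by
  rcases eq_or_ne r 0 with rfl | hr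
  · simp
  · exact natDegree_pow' (pow_ne_zero _ (leadingCoeff_ne_zero.2 hr))

lemma leadingCoeff_sq {R : Type*} [CommRing R] [IsDomain R] (r : Polynomial R) :
    (r ^ 2).leadingCoeff = r.leadingCoeff ^ 2 := leadingCoeff_pow r 2

-- degree bounds for the three summands of a piece
lemma natDeg_A2X_le (A : PR) : (A ^ 2 * Polynomial.X).natDegree ≤ 2 * A.natDegree + 1 := by
  refine natDegree_mul_le.trans ?_
  rw [natDeg_sq, natDegree_X]

lemma natDeg_B2Y_le (B : PR) : (B ^ 2 * Yc).natDegree ≤ 2 * B.natDegree := by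
  refine natDegree_mul_le.trans ?_
  rw [natDeg_sq]
  simp [Yc, natDegree_C]

lemma natDeg_cross_le (A B : PR) : (2 * (A * B)).natDegree ≤ A.natDegree + B.natDegree := by
  refine natDegree_mul_le.trans ?_
  have h2 : (2 : PR).natDegree = 0 := natDegree_ofNat 2
  rw [h2]
  simpa using natDegree_mul_le

lemma coeff_A2X_top (A : PR) :
    (A ^ 2 * Polynomial.X).coeff (2 * A.natDegree + 1) = A.leadingCoeff ^ 2 := by
  rw [coeff_mul_X, ← natDeg_sq, coeff_natDegree, leadingCoeff_sq]

lemma coeff_B2Y_top (B : PR) :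
    (B ^ 2 * Yc).coeff (2 * B.natDegree) = B.leadingCoeff ^ 2 * Polynomial.X := by
  rw [Yc, coeff_mul_C, ← natDeg_sq, coeff_natDegree, leadingCoeff_sq]

/-- piece coefficients in the case `dB ≤ dA`, at level `2dA + 1` -/
lemma piece_coeff_caseA {A B : PR} (hBA : B.natDegree ≤ A.natDegree) :
    (pieceFun (A, B)).coeff (2 * A.natDegree + 1) = A.leadingCoeff ^ 2 := by
  unfold pieceFun
  simp only [coeff_add]
  rw [coeff_A2X_top,
    coeff_eq_zero_of_natDegree_lt (lt_of_le_of_lt (natDeg_B2Y_le B) (by omega)),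
    coeff_eq_zero_of_natDegree_lt (lt_of_le_of_lt (natDeg_cross_le A B) (by omega))]
  ring

/-- piece coefficients in the case `dA < dB`, at level `2dB` -/
lemma piece_coeff_caseB {A B : PR} (hAB : A.natDegree < B.natDegree) :
    (pieceFun (A, B)).coeff (2 * B.natDegree) = B.leadingCoeff ^ 2 * Polynomial.X := by
  unfold pieceFun
  simp only [coeff_add]
  rw [coeff_B2Y_top,
    coeff_eq_zero_of_natDegree_lt (lt_of_le_of_lt (natDeg_A2X_le A) (by omega)),
    coeff_eq_zero_of_natDegree_lt (lt_of_le_of_lt (natDeg_cross_le A B) (by omega))]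
  ring

lemma piece_coeff_zero_of_big {A B : PR} {κ : ℕ}
    (h1 : 2 * A.natDegree + 1 < κ) (h2 : 2 * B.natDegree < κ) :
    (pieceFun (A, B)).coeff κ = 0 := by
  unfold pieceFun
  simp only [coeff_add]
  rw [coeff_eq_zero_of_natDegree_lt (lt_of_le_of_lt (natDeg_A2X_le A) h1),
    coeff_eq_zero_of_natDegree_lt (lt_of_le_of_lt (natDeg_B2Y_le B) h2),
    coeff_eq_zero_of_natDegree_lt (lt_of_le_of_lt (natDeg_cross_le A B) (by omega))]
  ring

/-- nonnegativity of top coefficients of pieces, evaluated at positive reals. -/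
lemma piece_coeff_eval_nonneg (A B : PR) (κ : ℕ) (h2 : 2 ≤ κ)
    (hle : (pieceFun (A, B)).natDegree ≤ κ) (c : ℝ) (hc : 0 < c) :
    0 ≤ ((pieceFun (A, B)).coeff κ).eval c := by
  rcases le_or_gt B.natDegree A.natDegree with hBA | hAB
  · rcases eq_or_ne A 0 with rfl | hA
    · -- then B.natDegree = 0 as well; piece = B^2 * Yc with natDegree ≤ 0 < 2 ≤ κ
      have hB0 : B.natDegree = 0 := le_antisymm (by simpa using hBA) (Nat.zero_le _)
      have : (pieceFun (0, B)).coeff κ = 0 := by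
        apply piece_coeff_zero_of_big
        · simp only [natDegree_zero]; omega
        · omega
      rw [this]; simp
    · -- κ ≥ 2dA+1 since that coefficient is nonzero
      have hne : (pieceFun (A, B)).coeff (2 * A.natDegree + 1) ≠ 0 := by
        rw [piece_coeff_caseA hBA]
        exact pow_ne_zero _ (leadingCoeff_ne_zero.2 hA)
      have hκge : 2 * A.natDegree + 1 ≤ κ :=
        le_trans (le_natDegree_of_ne_zero hne) hle
      rcases eq_or_lt_of_le hκge with heq | hlt
      · rw [← heq, piece_coeff_caseA hBA]
        simp only [eval_pow]
        positivity
      · rw [piece_coeff_zero_of_big hlt (by omega)]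
        simp
  · -- dA < dB
    have hB : B ≠ 0 := by
      intro h; rw [h] at hAB; simp at hAB
    have hne : (pieceFun (A, B)).coeff (2 * B.natDegree) ≠ 0 := by
      rw [piece_coeff_caseB hAB]
      exact mul_ne_zero (pow_ne_zero _ (leadingCoeff_ne_zero.2 hB)) X_ne_zero
    have hκge : 2 * B.natDegree ≤ κ := le_trans (le_natDegree_of_ne_zero hne) hle
    rcases eq_or_lt_of_le hκge with heq | hlt
    · rw [← heq, piece_coeff_caseB hAB]
      simp only [eval_mul, eval_pow, eval_X]
      positivity
    · rw [piece_coeff_zero_of_big (by omega) hlt]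
      simp

lemma sq_coeff_eval_nonneg (r : PR) (κ : ℕ)
    (hle : (r ^ 2).natDegree ≤ κ) (c : ℝ) :
    0 ≤ ((r ^ 2).coeff κ).eval c := by
  rcases eq_or_lt_of_le hle with heq | hlt
  · rw [← heq, coeff_natDegree, leadingCoeff_sq]
    simp only [eval_pow]
    positivity
  · rw [coeff_eq_zero_of_natDegree_lt hlt]
    simp




lemma msum_eq_zero {M : Type*} [AddCommMonoid M] (s : Multiset M)
    (h : ∀ x ∈ s, x = 0) : s.sum = 0 := by
  induction s using Multiset.induction with
  | empty => simp
  | cons a t ih =>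
    rw [Multiset.sum_cons, h a (Multiset.mem_cons_self a t),
      ih (fun x hx => h x (Multiset.mem_cons_of_mem hx)), add_zero]

section Qstar

variable (N : ℕ)

/-- the witness element `β(y)² x + y + 2 β(y)` -/
noncomputable def qstar : PR :=
  Polynomial.C ((beta N) ^ 2) * Polynomial.X + Polynomial.C (Polynomial.X + 2 * beta N)

lemma qstar_eq_piece : qstar N = pieceFun (Polynomial.C (beta N), 1) := by
  unfold qstar pieceFun Yc
  simp only [one_pow, mul_one, map_add, map_mul, map_pow, map_ofNat]
  ring

lemma qstar_coeff_one : (qstar N).coeff 1 = (beta N) ^ 2 := by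
  unfold qstar
  have h1 : (Polynomial.C ((beta N) ^ 2) * Polynomial.X).coeff 1 = (beta N) ^ 2 := by
    have := coeff_mul_X (Polynomial.C ((beta N) ^ 2) : PR) 0
    rw [show (0:ℕ) + 1 = 1 from rfl] at this
    rw [this, coeff_C]
    simp
  rw [coeff_add, h1, coeff_C]
  simp

lemma qstar_coeff_zero : (qstar N).coeff 0 = Polynomial.X + 2 * beta N := by
  unfold qstar
  rw [coeff_add, mul_coeff_zero]
  simp [coeff_X_zero]

lemma qstar_coeff_big {κ : ℕ} (hκ : 2 ≤ κ) : (qstar N).coeff κ = 0 := by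
  unfold qstar
  rw [coeff_add]
  have h1 : (Polynomial.C ((beta N) ^ 2) * Polynomial.X).natDegree < κ := by
    have := natDegree_mul_le (p := Polynomial.C ((beta N) ^ 2)) (q := (Polynomial.X : PR))
    simp only [natDegree_C, natDegree_X] at this
    omega
  rw [coeff_eq_zero_of_natDegree_lt h1, coeff_C, if_neg (by omega)]
  simp

end Qstar

/-- Phase 1: rigidity—in any representation of `qstar`, all data are constant in `x`. -/
lemma rigidity (N : ℕ) (ls : Multiset PR) (lab : Multiset (PR × PR))
    (hsum : (ls.map (fun r => r ^ 2)).sum + (lab.map pieceFun).sum = qstar N) :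
    (∀ r ∈ ls, r.natDegree = 0) ∧ ∀ z ∈ lab, z.1.natDegree = 0 ∧ z.2.natDegree = 0 := by
  set members : Multiset PR := ls.map (fun r => r ^ 2) + lab.map pieceFun with hmemdef
  have hms : members.sum = qstar N := by rw [hmemdef, Multiset.sum_add]; exact hsum
  set κ := (members.map natDegree).sup with hκdef
  have hle : ∀ u ∈ members, u.natDegree ≤ κ := fun u hu =>
    Multiset.le_sup (Multiset.mem_map_of_mem _ hu)
  have hκle : κ ≤ 1 := by
    by_contra hκ
    push_neg at hκ
    have hκ2 : 2 ≤ κ := hκ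
    -- κ is attained
    have hns : (members.map natDegree).sup ≠ 0 := by rw [← hκdef]; omega
    have hmem0 : κ ∈ members.map natDegree := by
      rcases multiset_sup_mem (members.map natDegree) with h0 | h
      · exact absurd h0 hns
      · rw [hκdef]; exact h
    obtain ⟨u₀, hu₀, hdeg₀⟩ := Multiset.mem_map.1 hmem0
    have hu₀ne : u₀ ≠ 0 := by
      intro h; rw [h, natDegree_zero] at hdeg₀; omega
    have hlead : u₀.coeff κ ≠ 0 := by
      rw [← hdeg₀]
      exact coeff_ne_zero_of_eq_degree (degree_eq_natDegree hu₀ne)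
    have hzero : ∀ c : ℝ, 0 < c → (u₀.coeff κ).eval c = 0 := by
      intro c hc
      have hsum0 : ((members.map (fun u => ((u.coeff κ).eval c))).sum : ℝ) = 0 := by
        have h1 : (members.map (fun u => u.coeff κ)).sum = (qstar N).coeff κ := by
          rw [← hms, coeff_multiset_sum]
        have h2 : ((members.map (fun u => u.coeff κ)).map (fun q => q.eval c)).sum
            = ((qstar N).coeff κ).eval c := by
          rw [← eval_multiset_sum, h1]
        rw [Multiset.map_map] at h2
        rw [show (members.map (fun u => ((u.coeff κ).eval c)))
            = members.map ((fun q => q.eval c) ∘ (fun u => u.coeff κ)) from rfl, h2,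
          qstar_coeff_big N hκ2]
        simp
      have hnn : ∀ x ∈ members.map (fun u => ((u.coeff κ).eval c)), (0:ℝ) ≤ x := by
        intro x hx
        obtain ⟨u, hu, rfl⟩ := Multiset.mem_map.1 hx
        have hu' := hle u hu
        rw [hmemdef] at hu
        rcases Multiset.mem_add.1 hu with h | h
        · obtain ⟨r, _, rfl⟩ := Multiset.mem_map.1 h
          exact sq_coeff_eval_nonneg r κ hu' c
        · obtain ⟨z, _, rfl⟩ := Multiset.mem_map.1 h
          exact piece_coeff_eval_nonneg z.1 z.2 κ hκ2 hu' c hc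
      exact member_eq_zero_of_sum_eq_zero _ hnn hsum0 _
        (Multiset.mem_map_of_mem _ hu₀)
    exact hlead (poly_eq_zero_of_eval_pos _ hzero)
  constructor
  · intro r hr
    have h1 : (r ^ 2).natDegree ≤ 1 := by
      refine le_trans (hle _ ?_) hκle
      rw [hmemdef]
      exact Multiset.mem_add.2 (Or.inl (Multiset.mem_map_of_mem _ hr))
    rw [natDeg_sq] at h1
    omega
  · rintro ⟨A, B⟩ hz
    have h1 : (pieceFun (A, B)).natDegree ≤ 1 := by
      refine le_trans (hle _ ?_) hκle
      rw [hmemdef]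
      exact Multiset.mem_add.2 (Or.inr (Multiset.mem_map_of_mem _ hz))
    rcases le_or_gt B.natDegree A.natDegree with hBA | hAB
    · rcases eq_or_ne A 0 with rfl | hA
      · have hB0 : B.natDegree = 0 := by
          have h' : B.natDegree ≤ (0 : PR).natDegree := hBA
          simpa using h'
        exact ⟨show (0:PR).natDegree = 0 from natDegree_zero, show B.natDegree = 0 from hB0⟩
      · have hne : (pieceFun (A, B)).coeff (2 * A.natDegree + 1) ≠ 0 := by
          rw [piece_coeff_caseA hBA]
          exact pow_ne_zero _ (leadingCoeff_ne_zero.2 hA)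
        have h2 := le_trans (le_natDegree_of_ne_zero hne) h1
        exact ⟨show A.natDegree = 0 by omega, show B.natDegree = 0 by omega⟩
    · have hB : B ≠ 0 := by intro h; rw [h] at hAB; simp at hAB
      have hne : (pieceFun (A, B)).coeff (2 * B.natDegree) ≠ 0 := by
        rw [piece_coeff_caseB hAB]
        exact mul_ne_zero (pow_ne_zero _ (leadingCoeff_ne_zero.2 hB)) X_ne_zero
      have h2 := le_trans (le_natDegree_of_ne_zero hne) h1
      exact absurd h2 (by omega)




lemma eval_sq_sum_nonneg (l : Multiset ℝ[X]) (c : ℝ) :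
    0 ≤ ((l.map fun p => p ^ 2).sum).eval c := by
  rw [eval_multiset_sum, Multiset.map_map]
  apply Multiset.sum_nonneg
  intro x hx
  obtain ⟨p, _, rfl⟩ := Multiset.mem_map.1 hx
  simp only [Function.comp_apply, eval_pow]
  positivity

lemma eval_sq_sum_zero (l : Multiset ℝ[X]) (c : ℝ)
    (h : ((l.map fun p => p ^ 2).sum).eval c = 0) : ∀ p ∈ l, p.eval c = 0 := by
  intro p hp
  rw [eval_multiset_sum, Multiset.map_map] at h
  have hnn : ∀ x ∈ l.map ((fun q => q.eval c) ∘ fun p => p ^ 2), (0:ℝ) ≤ x := by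
    intro x hx
    obtain ⟨r, _, rfl⟩ := Multiset.mem_map.1 hx
    simp only [Function.comp_apply, eval_pow]
    positivity
  have := member_eq_zero_of_sum_eq_zero _ hnn h ((p.eval c) ^ 2) (by
    have : ((fun q => q.eval c) ∘ fun p => p ^ 2) p = (p.eval c) ^ 2 := by
      simp [Function.comp_apply]
    rw [← this]
    exact Multiset.mem_map_of_mem _ hp)
  exact pow_eq_zero_iff (by norm_num) |>.1 this

lemma beta_eq_prod {N : ℕ} (hN : 2 ≤ N) (ρ : Fin N → ℝ) (hρinj : Function.Injective ρ)
    (hρ0 : ∀ i, (beta N).eval (ρ i) = 0) :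
    beta N = ∏ i, (X - C (ρ i)) := by
  obtain ⟨v, hv⟩ := prod_X_sub_C_dvd N ρ hρinj (beta N) hρ0
  have hPmonic : (∏ i, (X - C (ρ i))).Monic :=
    monic_prod_of_monic _ _ (fun i _ => monic_X_sub_C _)
  have hPdeg : (∏ i, (X - C (ρ i))).natDegree = N := by
    rw [natDegree_prod _ _ (fun i _ => (monic_X_sub_C (ρ i)).ne_zero)]
    simp [natDegree_X_sub_C]
  have hβm := beta_monic hN
  have hβd := beta_natDegree hN
  have hvne : v ≠ 0 := by
    intro h; rw [h, mul_zero] at hv; exact hβm.ne_zero hv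
  have hdegv : v.natDegree = 0 := by
    have h1 : (beta N).natDegree = (∏ i, (X - C (ρ i))).natDegree + v.natDegree := by
      rw [hv, natDegree_mul hPmonic.ne_zero hvne]
    rw [hβd, hPdeg] at h1
    omega
  have hleadv : v.leadingCoeff = 1 := by
    have h1 : (beta N).leadingCoeff = (∏ i, (X - C (ρ i))).leadingCoeff * v.leadingCoeff := by
      rw [hv, leadingCoeff_mul]
    rw [hβm.leadingCoeff, hPmonic.leadingCoeff, one_mul] at h1
    exact h1.symm
  have hv1 : v = 1 := by
    rw [eq_C_of_natDegree_eq_zero hdegv]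
    have : v.coeff 0 = v.leadingCoeff := by rw [leadingCoeff, hdegv]
    rw [this, hleadv, map_one]
  rw [hv, hv1, mul_one]

/-- Step 1: a sum of squares equal to `β²` consists of multiples of `β`. -/
lemma step1 {N : ℕ} (hN : 2 ≤ N) (l : Multiset ℝ[X])
    (hsum : (l.map fun p => p ^ 2).sum = (beta N) ^ 2) :
    ∀ p ∈ l, ∃ lam : ℝ, p = Polynomial.C lam * beta N := by
  intro p hp
  have hdegF : ((beta N) ^ 2).natDegree = 2 * N := by
    rw [natDeg_sq, beta_natDegree hN]
  have hdeg : p.natDegree ≤ N := by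
    have := sos_deg_bound l _ hsum p hp
    omega
  obtain ⟨ρ, hρinj, hρ0⟩ := beta_roots hN
  have hroots : ∀ i, p.eval (ρ i) = 0 := by
    intro i
    apply eval_sq_sum_zero l (ρ i) _ p hp
    rw [hsum, eval_pow, hρ0 i]
    ring
  have hdvd := prod_X_sub_C_dvd N ρ hρinj p hroots
  rw [← beta_eq_prod hN ρ hρinj hρ0] at hdvd
  obtain ⟨v, hv⟩ := hdvd
  rcases eq_or_ne v 0 with rfl | hvne
  · exact ⟨0, by rw [hv, map_zero, zero_mul, mul_zero]⟩
  · have hdegv : v.natDegree = 0 := by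
      have h1 : p.natDegree = (beta N).natDegree + v.natDegree := by
        rw [hv, natDegree_mul (beta_monic hN).ne_zero hvne]
      rw [beta_natDegree hN] at h1
      omega
    refine ⟨v.coeff 0, ?_⟩
    have hvc : v = C (v.coeff 0) := eq_C_of_natDegree_eq_zero hdegv
    rw [hv, ← hvc, mul_comm]



lemma piece_C_eq (a b : ℝ[X]) :
    pieceFun (Polynomial.C a, Polynomial.C b)
      = Polynomial.C (a ^ 2) * Polynomial.X + Polynomial.C (b ^ 2 * Polynomial.X + 2 * (a * b)) := by
  unfold pieceFun Yc
  simp only [map_add, map_mul, map_pow, map_ofNat]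
  ring

lemma coeff_CXC_one (p q : ℝ[X]) :
    ((Polynomial.C p * Polynomial.X + Polynomial.C q : PR)).coeff 1 = p := by
  have h1 : (Polynomial.C p * Polynomial.X : PR).coeff 1 = p := by
    have := coeff_mul_X (Polynomial.C p : PR) 0
    rw [show (0:ℕ) + 1 = 1 from rfl] at this
    rw [this, coeff_C]
    simp
  rw [coeff_add, h1, coeff_C]
  simp

lemma coeff_CXC_zero (p q : ℝ[X]) :
    ((Polynomial.C p * Polynomial.X + Polynomial.C q : PR)).coeff 0 = q := by
  rw [coeff_add, mul_coeff_zero]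
  simp [coeff_X_zero]

/-- The central rigidity theorem: the only quadratic-module representations of `qstar`
are by scalar multiples of `qstar` itself. -/
theorem claimE (N : ℕ) (hN : 2 ≤ N) (ls : Multiset PR) (lab : Multiset (PR × PR))
    (hsum : (ls.map (fun r => r ^ 2)).sum + (lab.map pieceFun).sum = qstar N) :
    (∀ r ∈ ls, r = 0) ∧
    ∀ z ∈ lab, ∃ μ : ℝ, z.1 = Polynomial.C (Polynomial.C μ * beta N)
      ∧ z.2 = Polynomial.C (Polynomial.C μ) := by
  classical
  obtain ⟨hls1, hlab1⟩ := rigidity N ls lab hsum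
  obtain ⟨ls₀, -, rfl⟩ := multiset_skolem (fun r₀ : ℝ[X] => (Polynomial.C r₀ : PR))
    (fun _ => True) ls
    (fun r hr => ⟨r.coeff 0, trivial, eq_C_of_natDegree_eq_zero (hls1 r hr)⟩)
  obtain ⟨lab₀, -, rfl⟩ := multiset_skolem
    (fun w : ℝ[X] × ℝ[X] => ((Polynomial.C w.1 : PR), (Polynomial.C w.2 : PR)))
    (fun _ => True) lab
    (fun z hz => ⟨(z.1.coeff 0, z.2.coeff 0), trivial, by
      obtain ⟨h1, h2⟩ := hlab1 z hz
      exact Prod.ext (eq_C_of_natDegree_eq_zero h1) (eq_C_of_natDegree_eq_zero h2)⟩)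
  -- coefficient extraction
  have hcoeff : ∀ k : ℕ,
      (ls₀.map fun r => (((Polynomial.C r : PR)) ^ 2).coeff k).sum
        + (lab₀.map fun w => ((pieceFun (Polynomial.C w.1, Polynomial.C w.2)).coeff k)).sum
      = (qstar N).coeff k := by
    intro k
    conv_rhs => rw [← hsum]
    rw [coeff_add, coeff_multiset_sum, coeff_multiset_sum,
      Multiset.map_map, Multiset.map_map, Multiset.map_map, Multiset.map_map]
    rfl
  -- equation (I): coefficient of x
  have hI : (lab₀.map fun w => w.1 ^ 2).sum = (beta N) ^ 2 := by
    have h1 := hcoeff 1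
    rw [qstar_coeff_one] at h1
    have e1 : (ls₀.map fun r => (((Polynomial.C r : PR)) ^ 2).coeff 1).sum = 0 := by
      apply msum_eq_zero
      intro x hx
      obtain ⟨r, _, rfl⟩ := Multiset.mem_map.1 hx
      rw [← map_pow, coeff_C]
      simp
    have e2 : (lab₀.map fun w => ((pieceFun (Polynomial.C w.1, Polynomial.C w.2)).coeff 1))
        = lab₀.map fun w => w.1 ^ 2 := by
      apply Multiset.map_congr rfl
      intro w _
      rw [piece_C_eq, coeff_CXC_one]
    rw [e1, e2, zero_add] at h1
    exact h1
  -- equation (II): coefficient of 1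
  have hII : (ls₀.map fun r => r ^ 2).sum
      + (lab₀.map fun w => w.2 ^ 2 * Polynomial.X + 2 * (w.1 * w.2)).sum
      = Polynomial.X + 2 * beta N := by
    have h0 := hcoeff 0
    rw [qstar_coeff_zero] at h0
    have e1 : (ls₀.map fun r => (((Polynomial.C r : PR)) ^ 2).coeff 0)
        = ls₀.map fun r => r ^ 2 := by
      apply Multiset.map_congr rfl
      intro r _
      rw [← map_pow, coeff_C]
      simp
    have e2 : (lab₀.map fun w => ((pieceFun (Polynomial.C w.1, Polynomial.C w.2)).coeff 0))
        = lab₀.map fun w => w.2 ^ 2 * Polynomial.X + 2 * (w.1 * w.2) := by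
      apply Multiset.map_congr rfl
      intro w _
      rw [piece_C_eq, coeff_CXC_zero]
    rw [e1, e2] at h0
    exact h0
  -- Step 1 : first components are multiples of β
  have hI' : ((lab₀.map Prod.fst).map fun p => p ^ 2).sum = (beta N) ^ 2 := by
    rw [Multiset.map_map]; exact hI
  have hlam : ∀ w ∈ lab₀, ∃ lam : ℝ, w.1 = Polynomial.C lam * beta N :=
    fun w hw => step1 hN _ hI' w.1 (Multiset.mem_map_of_mem _ hw)
  obtain ⟨lab₁, -, rfl⟩ := multiset_skolem
    (fun t : ℝ × ℝ[X] => (Polynomial.C t.1 * beta N, t.2)) (fun _ => True) lab₀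
    (fun w hw => by
      obtain ⟨lam, hlam'⟩ := hlam w hw
      exact ⟨(lam, w.2), trivial, Prod.ext hlam' rfl⟩)
  have hβne : beta N ≠ 0 := (beta_monic hN).ne_zero
  -- normalize (I)
  have hC1 : (lab₁.map fun t => Polynomial.C (t.1 ^ 2)).sum = (1 : ℝ[X]) := by
    have h1 : (lab₁.map fun t => (Polynomial.C t.1 * beta N) ^ 2).sum = (beta N) ^ 2 := by
      rw [← hI, Multiset.map_map]
      rfl
    have h2 : (lab₁.map fun t => (Polynomial.C t.1 * beta N) ^ 2)
        = lab₁.map fun t => Polynomial.C (t.1 ^ 2) * (beta N) ^ 2 := by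
      apply Multiset.map_congr rfl
      intro t _
      rw [mul_pow, map_pow]
    rw [h2, Multiset.sum_map_mul_right] at h1
    have hb2 : (beta N) ^ 2 ≠ 0 := pow_ne_zero _ hβne
    exact mul_right_cancel₀ hb2 (by rw [h1]; ring)
  -- the key quantities
  set bbar : ℝ[X] := (lab₁.map fun t => Polynomial.C t.1 * t.2).sum with hbbar
  set Sr : ℝ[X] := (ls₀.map fun r => r ^ 2).sum with hSr
  set Esum : ℝ[X] := (lab₁.map fun t => (t.2 - Polynomial.C t.1 * bbar) ^ 2).sum with hEsum
  set S2 : ℝ[X] := (lab₁.map fun t => t.2 ^ 2).sum with hS2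
  have hme : (((lab₁.map fun t : ℝ × ℝ[X] => t.2 - Polynomial.C t.1 * bbar).map
      fun p => p ^ 2).sum) = Esum := by
    rw [Multiset.map_map, hEsum]
    rfl
  -- (II) in terms of lab₁
  have hII' : Sr + (S2 * Polynomial.X + (2 * beta N) * bbar) = Polynomial.X + 2 * beta N := by
    rw [← hII]
    congr 1
    rw [Multiset.map_map]
    rw [show ((fun w : ℝ[X] × ℝ[X] => w.2 ^ 2 * Polynomial.X + 2 * (w.1 * w.2))
        ∘ fun t : ℝ × ℝ[X] => (Polynomial.C t.1 * beta N, t.2))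
      = fun t : ℝ × ℝ[X] => t.2 ^ 2 * Polynomial.X + (2 * beta N) * (Polynomial.C t.1 * t.2) from by
        funext t; simp only [Function.comp_apply]; ring]
    rw [Multiset.sum_map_add, Multiset.sum_map_mul_right, Multiset.sum_map_mul_left,
      ← hS2, ← hbbar]
  -- E = S2 - bbar²
  have hE : Esum = S2 - bbar ^ 2 := by
    rw [hEsum]
    have h1 : (lab₁.map fun t => (t.2 - Polynomial.C t.1 * bbar) ^ 2)
        = lab₁.map (fun t => t.2 ^ 2 + ((-(2 * bbar)) * (Polynomial.C t.1 * t.2)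
            + bbar ^ 2 * Polynomial.C (t.1 ^ 2))) := by
      apply Multiset.map_congr rfl
      intro t _
      rw [map_pow]
      ring
    rw [h1, Multiset.sum_map_add, Multiset.sum_map_add,
      Multiset.sum_map_mul_left, Multiset.sum_map_mul_left, hC1]
    rw [← hbbar, ← hS2]
    ring
  -- the master identity
  have hH : Hpoly N = Polynomial.X + beta N := by
    unfold beta
    ring
  have hdia : Sr + Polynomial.X * Esum + Polynomial.X * (bbar - 1) ^ 2
      + 2 * (Hpoly N) * (bbar - 1) = 0 := by
    rw [hH, hE]
    linear_combination hII'
  -- Step 2: bbar = 1 at the roots of H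
  have hbτ : ∀ i : Fin N, (bbar - 1).eval (tau N i) = 0 := by
    intro i
    have hev := congrArg (Polynomial.eval (tau N i)) hdia
    simp only [eval_add, eval_mul, eval_pow, eval_sub, eval_one, eval_X, eval_zero,
      eval_ofNat, Hpoly_eval_tau N i, mul_zero, zero_mul] at hev
    have hA : 0 ≤ Sr.eval (tau N i) := eval_sq_sum_nonneg _ _
    have hB : 0 ≤ Esum.eval (tau N i) := by
      rw [← hme]
      exact eval_sq_sum_nonneg _ _
    have hτ := tau_pos N i
    have hsq : (bbar.eval (tau N i) - 1) ^ 2 = 0 := by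
      rcases eq_or_lt_of_le (sq_nonneg (bbar.eval (tau N i) - 1)) with h | h
      · exact h.symm
      · exfalso
        nlinarith [mul_pos hτ h, mul_nonneg hτ.le hB]
    have hd : (bbar.eval (tau N i) - 1) = 0 := by
      exact pow_eq_zero_iff (by norm_num) |>.1 hsq
    simp only [eval_sub, eval_one]
    exact hd
  have hdvd : Hpoly N ∣ (bbar - 1) := by
    have := prod_X_sub_C_dvd N (tau N) (tau_injective N) (bbar - 1) hbτ
    exact this
  obtain ⟨ζ, hζ⟩ := hdvd
  -- Step 3 : ζ = 0
  have hζ0 : ζ = 0 := by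
    by_contra hζne
    have hbound : ∀ c : ℝ, (N + 1) * Tc N ≤ c → |(Polynomial.X * ζ).eval c| ≤ 2 := by
      intro c hc
      have hτc : ∀ i, tau N i < c := by
        intro i
        have h1 := tau_le N i
        have h2 := Tc_pos N
        nlinarith
      have hHc : 0 < (Hpoly N).eval c := Hpoly_eval_pos N hτc
      have hcpos : 0 < c := by
        have h2 := Tc_pos N
        nlinarith
      have hev := congrArg (Polynomial.eval c) hdia
      rw [hζ] at hev
      simp only [eval_add, eval_mul, eval_pow, eval_sub, eval_one, eval_X, eval_zero,
        eval_ofNat] at hev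
      have hA : 0 ≤ Sr.eval c := eval_sq_sum_nonneg _ _
      have hB : 0 ≤ Esum.eval c := by
        rw [← hme]
        exact eval_sq_sum_nonneg _ _
      set z := ζ.eval c with hz
      set Hc := (Hpoly N).eval c with hHcd
      have h1 : c * (Hc * z) ^ 2 + 2 * (Hc * (Hc * z)) ≤ 0 := by nlinarith
      have h2 : c * z ^ 2 + 2 * z ≤ 0 := by
        have hH2 : 0 < Hc ^ 2 := by positivity
        nlinarith
      have h3 : (c * z) ^ 2 + 2 * (c * z) ≤ 0 := by nlinarith
      have h4 : -2 ≤ c * z ∧ c * z ≤ 0 := by constructor <;> nlinarith [sq_nonneg (c * z + 1)]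
      rw [eval_mul, eval_X, abs_le]
      exact ⟨by linarith [h4.1], by linarith [h4.2]⟩
    have hdeg : 0 < (Polynomial.X * ζ).degree := by
      rw [degree_mul, degree_X]
      have h1 : (0 : WithBot ℕ) ≤ ζ.degree := zero_le_degree_iff.2 hζne
      have h2 : (0 : WithBot ℕ) < 1 := by norm_num
      calc (0 : WithBot ℕ) < 1 + 0 := by rw [add_zero]; exact h2
        _ ≤ 1 + ζ.degree := by exact add_le_add_right h1 1
    have htend := Polynomial.abs_tendsto_atTop (Polynomial.X * ζ) hdeg
    obtain ⟨c, hc1, hc2⟩ :=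
      ((htend.eventually_ge_atTop 3).and (Filter.eventually_ge_atTop ((N + 1) * Tc N))).exists
    linarith [hbound c hc2]
  have hbb : bbar = 1 := by
    have h1 : bbar - 1 = 0 := by rw [hζ, hζ0, mul_zero]
    exact sub_eq_zero.1 h1
  -- Step 4: everything else vanishes
  have hdia4 : Sr + Polynomial.X * Esum = 0 := by
    rw [hbb] at hdia
    simpa using hdia
  have hptw : ∀ c : ℝ, 0 < c → Sr.eval c = 0 ∧ Esum.eval c = 0 := by
    intro c hc
    have hev := congrArg (Polynomial.eval c) hdia4
    simp only [eval_add, eval_mul, eval_X, eval_zero] at hev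
    have hA : 0 ≤ Sr.eval c := eval_sq_sum_nonneg _ _
    have hB : 0 ≤ Esum.eval c := by
      rw [← hme]
      exact eval_sq_sum_nonneg _ _
    constructor <;> nlinarith
  have hls0 : ∀ r ∈ ls₀, r = (0 : ℝ[X]) := by
    intro r hr
    apply poly_eq_zero_of_eval_pos
    intro c hc
    have h0 : ((ls₀.map fun p => p ^ 2).sum).eval c = 0 := by
      rw [← hSr]
      exact (hptw c hc).1
    exact eval_sq_sum_zero ls₀ c h0 r hr
  have hlab10 : ∀ t ∈ lab₁, t.2 = Polynomial.C t.1 := by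
    intro t ht
    have hz2 : ∀ c : ℝ, 0 < c → (t.2 - Polynomial.C t.1 * bbar).eval c = 0 := by
      intro c hc
      have h0 : (((lab₁.map fun t : ℝ × ℝ[X] => t.2 - Polynomial.C t.1 * bbar).map
          fun p => p ^ 2).sum).eval c = 0 := by
        rw [hme]
        exact (hptw c hc).2
      exact eval_sq_sum_zero _ c h0 _ (Multiset.mem_map_of_mem _ ht)
    have h1 : t.2 - Polynomial.C t.1 * bbar = 0 := poly_eq_zero_of_eval_pos _ hz2
    rw [hbb, mul_one] at h1
    exact sub_eq_zero.1 h1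
  -- final conclusions
  constructor
  · intro r hr
    obtain ⟨r₀, hr₀, rfl⟩ := Multiset.mem_map.1 hr
    rw [hls0 r₀ hr₀, map_zero]
  · intro z hz
    obtain ⟨w, hw, rfl⟩ := Multiset.mem_map.1 hz
    obtain ⟨t, ht, rfl⟩ := Multiset.mem_map.1 hw
    refine ⟨t.1, rfl, ?_⟩
    show Polynomial.C (((Polynomial.C t.1 * beta N, t.2) : ℝ[X] × ℝ[X]).2)
        = Polynomial.C (Polynomial.C t.1)
    rw [hlab10 t ht]



lemma sum_bind' {α M : Type*} [AddCommMonoid M] (s : Multiset α) (f : α → Multiset M) :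
    (s.bind f).sum = (s.map (fun a => (f a).sum)).sum := by
  induction s using Multiset.induction with
  | empty => simp
  | cons a t ih => simp [ih]

lemma pieceFun_smul (s A B : PR) :
    pieceFun (s * A, s * B) = s ^ 2 * pieceFun (A, B) := by
  unfold pieceFun
  ring

/-- the algebra isomorphism `ℝ[x,y] ≃ (ℝ[y])[x]` -/
noncomputable def Phi : MvPolynomial (Fin 2) ℝ ≃ₐ[ℝ] PR :=
  (MvPolynomial.finSuccEquiv ℝ 1).trans
    (Polynomial.mapAlgEquiv
      ((MvPolynomial.finSuccEquiv ℝ 0).trans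
        (Polynomial.mapAlgEquiv (MvPolynomial.isEmptyAlgEquiv ℝ (Fin 0)))))

lemma Phi_X0 : Phi (MvPolynomial.X 0) = (Polynomial.X : PR) := by
  unfold Phi
  simp [MvPolynomial.finSuccEquiv_X_zero]

lemma Phi_X1 : Phi (MvPolynomial.X 1) = Yc := by
  unfold Phi Yc
  have h1 : (1 : Fin 2) = (0 : Fin 1).succ := rfl
  rw [h1]
  simp only [AlgEquiv.trans_apply, MvPolynomial.finSuccEquiv_X_succ, coe_mapAlgEquiv, map_C]
  congr 1
  simp [MvPolynomial.finSuccEquiv_X_zero]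

/-- the defining set `S'` -/
def Sset : Set (MvPolynomial (Fin 2) ℝ) :=
  {p : MvPolynomial (Fin 2) ℝ | ∃ a b : MvPolynomial (Fin 2) ℝ,
    p = a ^ 2 * MvPolynomial.X 0 + b ^ 2 * MvPolynomial.X 1 + 2 * (a * b)}

/-- transporting representations through `Phi` -/
lemma rep_of_multiset (l : Multiset (MvPolynomial (Fin 2) ℝ))
    (hl : ∀ y ∈ l, ∃ r u, (u ∈ Sset ∨ u = 1) ∧ y = r ^ 2 * u) :
    ∃ (ls : Multiset PR) (lab : Multiset (PR × PR)),
      Phi l.sum = (ls.map (fun r => r ^ 2)).sum + (lab.map pieceFun).sum := by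
  induction l using Multiset.induction with
  | empty => exact ⟨0, 0, by simp⟩
  | cons y t ih =>
    obtain ⟨ls, lab, hrep⟩ := ih (fun z hz => hl z (Multiset.mem_cons_of_mem hz))
    obtain ⟨r, u, hu, hy⟩ := hl y (Multiset.mem_cons_self _ _)
    rcases hu with hu | rfl
    · obtain ⟨a, b, rfl⟩ := hu
      refine ⟨ls, (Phi r * Phi a, Phi r * Phi b) ::ₘ lab, ?_⟩
      rw [Multiset.sum_cons, map_add, hrep, Multiset.map_cons, Multiset.sum_cons, hy]
      have hkey : Phi (r ^ 2 * (a ^ 2 * MvPolynomial.X 0 + b ^ 2 * MvPolynomial.X 1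
          + 2 * (a * b))) = pieceFun (Phi r * Phi a, Phi r * Phi b) := by
        simp only [map_mul, map_add, map_pow, map_ofNat, Phi_X0, Phi_X1, pieceFun]
        ring
      rw [hkey]
      ring
    · refine ⟨(Phi r) ::ₘ ls, lab, ?_⟩
      rw [Multiset.sum_cons, map_add, hrep, Multiset.map_cons, Multiset.sum_cons, hy]
      have hkey : Phi (r ^ 2 * 1) = (Phi r) ^ 2 := by
        simp [map_mul, map_pow]
      rw [hkey]
      ring

lemma rep_of_mem_M (x : MvPolynomial (Fin 2) ℝ) (hx : x ∈ QMgenR Sset) :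
    ∃ (ls : Multiset PR) (lab : Multiset (PR × PR)),
      Phi x = (ls.map (fun r => r ^ 2)).sum + (lab.map pieceFun).sum := by
  obtain ⟨l, hl, hsum⟩ := rep_of_mem_QMgenR hx
  rw [← hsum]
  exact rep_of_multiset l hl

/-- sums of pieces of the special scalar form -/
lemma sum_of_scaled (N : ℕ) (m : Multiset (PR × PR))
    (h : ∀ z ∈ m, ∃ μ : ℝ, z.1 = Polynomial.C (Polynomial.C μ * beta N)
      ∧ z.2 = Polynomial.C (Polynomial.C μ)) :
    ∃ c : ℝ, 0 ≤ c ∧ (m.map pieceFun).sum = Polynomial.C (Polynomial.C c) * qstar N ∧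
      (c ≠ 0 → ∃ z ∈ m, ∃ μ : ℝ, μ ≠ 0 ∧ z.2 = Polynomial.C (Polynomial.C μ)) := by
  induction m using Multiset.induction with
  | empty => exact ⟨0, le_refl 0, by simp, fun h' => absurd rfl h'⟩
  | cons z t ih =>
    obtain ⟨c, hc0, hcsum, hcne⟩ := ih (fun w hw => h w (Multiset.mem_cons_of_mem hw))
    obtain ⟨μ, h1, h2⟩ := h z (Multiset.mem_cons_self _ _)
    refine ⟨c + μ ^ 2, by positivity, ?_, ?_⟩
    · rw [Multiset.map_cons, Multiset.sum_cons, hcsum]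
      have hz : pieceFun z = Polynomial.C (Polynomial.C (μ ^ 2)) * qstar N := by
        have hzeq : z = (Polynomial.C (Polynomial.C μ * beta N),
            Polynomial.C (Polynomial.C μ)) := Prod.ext h1 h2
        rw [hzeq]
        unfold pieceFun qstar Yc
        simp only [map_mul, map_pow, map_add, map_ofNat]
        ring
      rw [hz, show Polynomial.C (Polynomial.C (c + μ ^ 2))
          = Polynomial.C (Polynomial.C c) + Polynomial.C (Polynomial.C (μ ^ 2)) from by
        rw [← map_add, ← map_add]]
      ring
    · intro hne
      rcases eq_or_ne μ 0 with rfl | hμ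
      · have hcne' : c ≠ 0 := by simpa using hne
        obtain ⟨w, hw, hres⟩ := hcne hcne'
        exact ⟨w, Multiset.mem_cons_of_mem hw, hres⟩
      · exact ⟨z, Multiset.mem_cons_self _ _, μ, hμ, h2⟩

/-- factor of a nonzero constant is a nonzero constant -/
lemma eq_scalar_of_mul_eq_C {s w : PR} {lam : ℝ} (hlam : lam ≠ 0)
    (h : s * w = Polynomial.C (Polynomial.C lam)) :
    ∃ μ : ℝ, μ ≠ 0 ∧ s = Polynomial.C (Polynomial.C μ) := by
  have hC : (Polynomial.C (Polynomial.C lam) : PR) ≠ 0 :=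
    Polynomial.C_ne_zero.2 (Polynomial.C_ne_zero.2 hlam)
  have hs0 : s ≠ 0 := by rintro rfl; rw [zero_mul] at h; exact hC h.symm
  have hw0 : w ≠ 0 := by rintro rfl; rw [mul_zero] at h; exact hC h.symm
  have hdeg : s.natDegree = 0 := by
    have h1 : s.natDegree + w.natDegree = 0 := by
      rw [← natDegree_mul hs0 hw0, h, natDegree_C]
    omega
  have hs : s = Polynomial.C (s.coeff 0) := eq_C_of_natDegree_eq_zero hdeg
  set s0 : ℝ[X] := s.coeff 0 with hs0d
  have hw : w = Polynomial.C (w.coeff 0) := by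
    have hdw : w.natDegree = 0 := by
      have h1 : s.natDegree + w.natDegree = 0 := by
        rw [← natDegree_mul hs0 hw0, h, natDegree_C]
      omega
    exact eq_C_of_natDegree_eq_zero hdw
  set w0 : ℝ[X] := w.coeff 0 with hw0d
  have hmul : s0 * w0 = Polynomial.C lam := by
    apply Polynomial.C_injective
    rw [map_mul, ← hs, ← hw, h]
  have hs00 : s0 ≠ 0 := by rintro h0; rw [h0] at hs; rw [hs] at hs0; simp at hs0
  have hw00 : w0 ≠ 0 := by rintro h0; rw [h0] at hw; rw [hw] at hw0; simp at hw0
  have hdeg0 : s0.natDegree = 0 := by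
    have h1 : s0.natDegree + w0.natDegree = 0 := by
      rw [← natDegree_mul hs00 hw00, hmul, natDegree_C]
    omega
  have hs0C : s0 = Polynomial.C (s0.coeff 0) := eq_C_of_natDegree_eq_zero hdeg0
  refine ⟨s0.coeff 0, ?_, by rw [hs]; exact congrArg _ hs0C⟩
  intro h0
  have : s0 = 0 := by rw [hs0C, h0, map_zero]
  exact hs00 this

lemma qstar_ne_zero {N : ℕ} (hN : 2 ≤ N) : qstar N ≠ 0 := by
  intro h
  have := qstar_coeff_one N
  rw [h, coeff_zero] at this
  exact pow_ne_zero 2 (beta_monic hN).ne_zero this.symm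



lemma Phi_msum (s : Multiset (MvPolynomial (Fin 2) ℝ)) :
    Phi s.sum = (s.map (fun x => Phi x)).sum := by
  induction s using Multiset.induction with
  | empty => simp
  | cons a t ih => simp [ih]

/-- The key step: any finite generating set contains a scalar multiple of `qstar N`. -/
lemma keyN (G : Set (MvPolynomial (Fin 2) ℝ)) (hG : QMgenR G = QMgenR Sset)
    (N : ℕ) (hN : 2 ≤ N) :
    ∃ g ∈ insert (1 : MvPolynomial (Fin 2) ℝ) G, ∃ d : ℝ, d ≠ 0 ∧
      Phi g = Polynomial.C (Polynomial.C d) * qstar N := by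
  classical
  set aMV := Phi.symm (Polynomial.C (beta N)) with haMV
  set qMV := aMV ^ 2 * MvPolynomial.X 0 + (1 : MvPolynomial (Fin 2) ℝ) ^ 2 * MvPolynomial.X 1
    + 2 * (aMV * 1) with hqMV
  have hqs : Phi qMV = qstar N := by
    rw [hqMV, haMV, qstar_eq_piece]
    simp only [map_add, map_mul, map_pow, map_one, Phi_X0, Phi_X1,
      AlgEquiv.apply_symm_apply, map_ofNat]
    unfold pieceFun
    ring
  have hqmem : qMV ∈ QMgenR G := by
    rw [hG]
    exact subset_QMgenR _ ⟨aMV, 1, rfl⟩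
  obtain ⟨l, hl, hlsum⟩ := rep_of_mem_QMgenR hqmem
  have hstep : ∀ y ∈ l, ∃ z : (MvPolynomial (Fin 2) ℝ × MvPolynomial (Fin 2) ℝ)
      × (Multiset PR × Multiset (PR × PR)),
      ((z.1.2 ∈ insert (1 : MvPolynomial (Fin 2) ℝ) G) ∧
        Phi z.1.2 = (z.2.1.map (fun r => r ^ 2)).sum + (z.2.2.map pieceFun).sum) ∧
      y = z.1.1 ^ 2 * z.1.2 := by
    intro y hy
    obtain ⟨r, u, hu, hy'⟩ := hl y hy
    have humem : u ∈ QMgenR Sset := by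
      rcases hu with hu | rfl
      · rw [← hG]; exact subset_QMgenR _ hu
      · exact one_mem_QMgenR _
    obtain ⟨ls, lab, hrep⟩ := rep_of_mem_M u humem
    refine ⟨((r, u), (ls, lab)), ⟨?_, hrep⟩, hy'⟩
    rcases hu with hu | rfl
    · exact Set.mem_insert_of_mem _ hu
    · exact Set.mem_insert _ _
  obtain ⟨lq, hlq, hleq⟩ := multiset_skolem _ _ l hstep
  set ls_tot : Multiset PR := lq.bind (fun z => z.2.1.map (fun r => Phi z.1.1 * r)) with hlst
  set lab_tot : Multiset (PR × PR) := lq.bind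
    (fun z => z.2.2.map (fun w => (Phi z.1.1 * w.1, Phi z.1.1 * w.2))) with hlabt
  have htot : (lq.map (fun z => (Phi z.1.1) ^ 2 * Phi z.1.2)).sum = qstar N := by
    rw [← hqs, ← hlsum, hleq, Phi_msum, Multiset.map_map]
    refine congrArg Multiset.sum (Multiset.map_congr rfl ?_)
    intro z _
    simp [map_mul, map_pow]
  have hper : ∀ z ∈ lq,
      ((z.2.1.map (fun r => Phi z.1.1 * r)).map (fun r => r ^ 2)).sum
        + ((z.2.2.map (fun w => (Phi z.1.1 * w.1, Phi z.1.1 * w.2))).map pieceFun).sum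
      = (Phi z.1.1) ^ 2 * Phi z.1.2 := by
    intro z hz
    rw [(hlq z hz).2, Multiset.map_map, Multiset.map_map, mul_add]
    congr 1
    · rw [show ((fun r : PR => r ^ 2) ∘ fun r => Phi z.1.1 * r)
          = fun r => (Phi z.1.1) ^ 2 * r ^ 2 from by
        funext r; simp only [Function.comp_apply]; ring]
      rw [Multiset.sum_map_mul_left]
    · rw [show (pieceFun ∘ fun w : PR × PR => (Phi z.1.1 * w.1, Phi z.1.1 * w.2))
          = fun w => (Phi z.1.1) ^ 2 * pieceFun w from by
        funext w; simp only [Function.comp_apply]; exact pieceFun_smul _ _ _]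
      rw [Multiset.sum_map_mul_left]
  have hsum_tot : (ls_tot.map (fun r => r ^ 2)).sum + (lab_tot.map pieceFun).sum = qstar N := by
    rw [hlst, hlabt, Multiset.map_bind, Multiset.map_bind, sum_bind', sum_bind',
      ← Multiset.sum_map_add]
    rw [Multiset.map_congr rfl (fun z hz => hper z hz)]
    exact htot
  obtain ⟨hc_ls, hc_lab⟩ := claimE N hN ls_tot lab_tot hsum_tot
  have hper2 : ∀ z ∈ lq, ∃ c : ℝ, 0 ≤ c ∧
      (Phi z.1.1) ^ 2 * Phi z.1.2 = Polynomial.C (Polynomial.C c) * qstar N ∧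
      (c ≠ 0 → ∃ μ : ℝ, μ ≠ 0 ∧ ∃ w : PR,
        Phi z.1.1 * w = Polynomial.C (Polynomial.C μ)) := by
    intro z hz
    have hm : ∀ w ∈ z.2.2.map (fun w => (Phi z.1.1 * w.1, Phi z.1.1 * w.2)),
        ∃ μ : ℝ, w.1 = Polynomial.C (Polynomial.C μ * beta N)
          ∧ w.2 = Polynomial.C (Polynomial.C μ) := by
      intro w hw
      exact hc_lab w (by rw [hlabt]; exact Multiset.mem_bind.2 ⟨z, hz, hw⟩)
    obtain ⟨c, hc0, hcsum, hcw⟩ := sum_of_scaled N _ hm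
    refine ⟨c, hc0, ?_, ?_⟩
    · have hzero : ((z.2.1.map (fun r => Phi z.1.1 * r)).map (fun r => r ^ 2)).sum = 0 := by
        apply msum_eq_zero
        intro x hx
        obtain ⟨r, hr, rfl⟩ := Multiset.mem_map.1 hx
        obtain ⟨r', hr', rfl⟩ := Multiset.mem_map.1 hr
        have : Phi z.1.1 * r' = 0 := hc_ls _ (by
          rw [hlst]
          exact Multiset.mem_bind.2 ⟨z, hz, Multiset.mem_map_of_mem _ hr'⟩)
        rw [this]
        ring
      rw [← hper z hz, hzero, zero_add, hcsum]
    · intro hc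
      obtain ⟨w', hw', μ, hμ, hw2⟩ := hcw hc
      obtain ⟨w, hw, rfl⟩ := Multiset.mem_map.1 hw'
      exact ⟨μ, hμ, w.2, hw2⟩
  have hex : ∃ z ∈ lq, (Phi z.1.1) ^ 2 * Phi z.1.2 ≠ 0 := by
    by_contra hall
    push_neg at hall
    have h0 : (lq.map (fun z => (Phi z.1.1) ^ 2 * Phi z.1.2)).sum = 0 := by
      apply msum_eq_zero
      intro x hx
      obtain ⟨z, hz, rfl⟩ := Multiset.mem_map.1 hx
      exact hall z hz
    rw [htot] at h0
    exact qstar_ne_zero hN h0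
  obtain ⟨z₀, hz₀, hne⟩ := hex
  obtain ⟨c, hc0, hceq, hcw⟩ := hper2 z₀ hz₀
  have hcne : c ≠ 0 := by
    rintro rfl
    rw [map_zero, map_zero, zero_mul] at hceq
    exact hne hceq
  obtain ⟨μ, hμ, w, hw⟩ := hcw hcne
  obtain ⟨ν, hν, hsconst⟩ := eq_scalar_of_mul_eq_C hμ hw
  have hPhig : Phi z₀.1.2 = Polynomial.C (Polynomial.C (c / ν ^ 2)) * qstar N := by
    have h1 : (Polynomial.C (Polynomial.C (ν ^ 2)) : PR) * Phi z₀.1.2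
        = Polynomial.C (Polynomial.C c) * qstar N := by
      rw [← hceq, hsconst, ← map_pow, ← map_pow]
    have hcν : (Polynomial.C (Polynomial.C (ν ^ 2)) : PR) ≠ 0 :=
      Polynomial.C_ne_zero.2 (Polynomial.C_ne_zero.2 (pow_ne_zero _ hν))
    apply mul_left_cancel₀ hcν
    rw [h1, ← mul_assoc, ← map_mul, ← map_mul]
    have : ν ^ 2 * (c / ν ^ 2) = c := by
      field_simp
    rw [this]
  exact ⟨z₀.1.2, (hlq z₀ hz₀).1, c / ν ^ 2, div_ne_zero hcne (pow_ne_zero _ hν), hPhig⟩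


end Dev
end NFG

open MvPolynomial

/-- The quadratic module in `ℝ[x,y]` generated by
`S' = {a²x + b²y + 2ab : a, b ∈ ℝ[x,y]}` is not finitely generated. -/
theorem stmt2 :
    ¬ ∃ G : Set (MvPolynomial (Fin 2) ℝ), G.Finite ∧
      QMgenR G = QMgenR {p : MvPolynomial (Fin 2) ℝ |
        ∃ a b : MvPolynomial (Fin 2) ℝ, p = a ^ 2 * X 0 + b ^ 2 * X 1 + 2 * (a * b)} := by
  rintro ⟨G, hGfin, hG⟩
  have hG' : QMgenR G = QMgenR NFG.Sset := hG
  have key := fun k : ℕ => NFG.keyN G hG' (k + 2) (by omega)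
  choose g hgmem d hdne hgd using key
  haveI : Finite ↥(insert (1 : MvPolynomial (Fin 2) ℝ) G) := (hGfin.insert 1).to_subtype
  obtain ⟨m, n, hmn, heq⟩ := Finite.exists_ne_map_eq_of_infinite
    (fun k : ℕ => (⟨g k, hgmem k⟩ : ↥(insert (1 : MvPolynomial (Fin 2) ℝ) G)))
  have heq' : g m = g n := congrArg Subtype.val heq
  have h1 : Polynomial.C (Polynomial.C (d m)) * NFG.qstar (m + 2)
      = Polynomial.C (Polynomial.C (d n)) * NFG.qstar (n + 2) := by
    rw [← hgd m, ← hgd n, heq']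
  have h2 := congrArg (fun p : NFG.PR => (p.coeff 1).natDegree) h1
  simp only [Polynomial.coeff_C_mul, NFG.qstar_coeff_one] at h2
  have hdm : (Polynomial.C (d m) * (NFG.beta (m + 2)) ^ 2).natDegree = 2 * (m + 2) := by
    rw [Polynomial.natDegree_mul (Polynomial.C_ne_zero.2 (hdne m))
        (pow_ne_zero _ (NFG.beta_monic (by omega : 2 ≤ m + 2)).ne_zero),
      Polynomial.natDegree_C, NFG.natDeg_sq, NFG.beta_natDegree (by omega : 2 ≤ m + 2)]
    omega
  have hdn : (Polynomial.C (d n) * (NFG.beta (n + 2)) ^ 2).natDegree = 2 * (n + 2) := by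
    rw [Polynomial.natDegree_mul (Polynomial.C_ne_zero.2 (hdne n))
        (pow_ne_zero _ (NFG.beta_monic (by omega : 2 ≤ n + 2)).ne_zero),
      Polynomial.natDegree_C, NFG.natDeg_sq, NFG.beta_natDegree (by omega : 2 ≤ n + 2)]
    omega
  rw [hdm, hdn] at h2
  omega
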